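/- Quantitative no-go bound, mixed target state (analytic core of Theorem 4.1): Let N ≥ 1 be a natural number, let ρ, φ be density matrices on ℂ^d with (1/2)·‖ρ − φ‖₁ = 2/(9N), and let M be a Hermitian matrix on (ℂ^d)^{⊗N} with 0 ≤ M ≤ I in the Loewner order. Then (1 − Tr(M·φ^{⊗N})) + (1/(9N))·Tr(M·ρ^{⊗N}) ≥ 1/(27N). -/

import Mathlib

open Matrix BigOperators
open scoped ComplexOrder

open Classical in
noncomputable def msqrt {n : Type*} [Fintype n] [DecidableEq n] (A : Matrix n n ℂ) :
    Matrix n n ℂ :=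
  if h : A.PosSemidef then
    (h.1.eigenvectorUnitary : Matrix n n ℂ) * diagonal ((↑) ∘ Real.sqrt ∘ h.1.eigenvalues) *
      (star h.1.eigenvectorUnitary : Matrix n n ℂ)
  else 0

noncomputable def traceNorm {n : Type*} [Fintype n] [DecidableEq n] (A : Matrix n n ℂ) : ℝ :=
  (msqrt (Aᴴ * A)).trace.re

noncomputable def fidelity {n : Type*} [Fintype n] [DecidableEq n] (ρ₀ ρ₁ : Matrix n n ℂ) : ℝ :=
  ((msqrt (msqrt ρ₀ * ρ₁ * msqrt ρ₀)).trace.re) ^ 2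

noncomputable def tensorPow {d : ℕ} (ρ : Matrix (Fin d) (Fin d) ℂ) (n : ℕ) :
    Matrix (Fin n → Fin d) (Fin n → Fin d) ℂ :=
  Matrix.of fun i j => ∏ k, ρ (i k) (j k)

namespace NoGoAux

section psd
open scoped MatrixOrder
variable {n : Type*} [Fintype n] [DecidableEq n]

lemma psd_trace_nonneg {A : Matrix n n ℂ} (hA : A.PosSemidef) : 0 ≤ A.trace.re := by
  have h : (0:ℂ) ≤ A.trace := hA.trace_nonneg
  exact (Complex.le_def.mp h).1

lemma trace_mul_psd_nonneg {M P : Matrix n n ℂ} (hM : M.PosSemidef) (hP : P.PosSemidef) :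
    0 ≤ (M * P).trace.re := by
  have h1 : M * P = (M * CFC.sqrt P) * CFC.sqrt P := by
    rw [mul_assoc, CFC.sqrt_mul_sqrt_self P hP.nonneg]
  have h2 : (M * P).trace = ((CFC.sqrt P)ᴴ * M * CFC.sqrt P).trace := by
    rw [h1, trace_mul_comm, (CFC.sqrt_nonneg P).posSemidef.1, ← mul_assoc]
  rw [h2]
  exact psd_trace_nonneg (hM.conjTranspose_mul_mul_same _)

lemma trace_mul_psd_le {M P : Matrix n n ℂ} (hM' : (1 - M).PosSemidef) (hP : P.PosSemidef) :
    (M * P).trace.re ≤ P.trace.re := by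
  have := trace_mul_psd_nonneg hM' hP
  rw [sub_mul, one_mul, trace_sub, Complex.sub_re] at this
  linarith

lemma jordan {A : Matrix n n ℂ} (hA : A.IsHermitian) :
    ∃ P Q : Matrix n n ℂ, P.PosSemidef ∧ Q.PosSemidef ∧ A = P - Q ∧
      traceNorm A = P.trace.re + Q.trace.re ∧ P.trace - Q.trace = A.trace := by
  set U : Matrix n n ℂ := (hA.eigenvectorUnitary : Matrix n n ℂ) with hU
  set ev := hA.eigenvalues with hev
  have hU2 : star U * U = 1 := (Matrix.mem_unitaryGroup_iff').mp hA.eigenvectorUnitary.2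
  set P : Matrix n n ℂ := U * diagonal (fun i => ((max (ev i) 0 : ℝ) : ℂ)) * star U with hPdef
  set Q : Matrix n n ℂ := U * diagonal (fun i => ((max (-ev i) 0 : ℝ) : ℂ)) * star U with hQdef
  have hstar : star U = Uᴴ := rfl
  have hdiagP : Matrix.PosSemidef (diagonal (fun i => ((max (ev i) 0 : ℝ) : ℂ))) :=
    Matrix.PosSemidef.diagonal fun i => by
      simp only [Pi.zero_apply]; exact_mod_cast le_max_right (ev i) 0
  have hdiagQ : Matrix.PosSemidef (diagonal (fun i => ((max (-ev i) 0 : ℝ) : ℂ))) :=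
    Matrix.PosSemidef.diagonal fun i => by
      simp only [Pi.zero_apply]; exact_mod_cast le_max_right (-ev i) 0
  have hP : P.PosSemidef := by rw [hPdef, hstar]; exact hdiagP.mul_mul_conjTranspose_same U
  have hQ : Q.PosSemidef := by rw [hQdef, hstar]; exact hdiagQ.mul_mul_conjTranspose_same U
  have hspec : A = U * diagonal (fun i => ((ev i : ℝ) : ℂ)) * star U := hA.spectral_theorem
  have hsub : A = P - Q := by
    have hdd : (fun i => ((max (ev i) 0 : ℝ) : ℂ) - ((max (-ev i) 0 : ℝ) : ℂ))
        = fun i => ((ev i : ℝ) : ℂ) := by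
      funext i
      simp only [← Complex.ofReal_sub, max_zero_sub_max_neg_zero_eq_self]
    rw [hPdef, hQdef, ← sub_mul, ← mul_sub, diagonal_sub, hdd, hspec]
  have htr : ∀ f : n → ℂ, (U * diagonal f * star U).trace = ∑ i, f i := by
    intro f
    rw [trace_mul_comm, ← mul_assoc, hU2, one_mul, trace_diagonal]
  have htrP : P.trace = ∑ i, ((max (ev i) 0 : ℝ) : ℂ) := htr _
  have htrQ : Q.trace = ∑ i, ((max (-ev i) 0 : ℝ) : ℂ) := htr _
  have htrA : A.trace = ∑ i, ((ev i : ℝ) : ℂ) := by rw [hspec]; exact htr _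
  have hmulUD : ∀ B C : Matrix n n ℂ, (U * B * star U) * (U * C * star U) = U * (B * C) * star U := by
    intro B C
    simp only [Matrix.mul_assoc]
    rw [← Matrix.mul_assoc (star U) U, hU2, Matrix.one_mul]
  refine ⟨P, Q, hP, hQ, hsub, ?_, ?_⟩
  · have hAA : Aᴴ * A = A * A := by rw [hA.eq]
    have hpsd : (Aᴴ * A).PosSemidef := Matrix.posSemidef_conjTranspose_mul_self A
    have hPQpsd : (P + Q).PosSemidef := hP.add hQ
    have habs : P + Q = U * diagonal (fun i => ((|ev i| : ℝ) : ℂ)) * star U := by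
      have hdd : (fun i => ((max (ev i) 0 : ℝ) : ℂ) + ((max (-ev i) 0 : ℝ) : ℂ))
          = fun i => ((|ev i| : ℝ) : ℂ) := by
        funext i
        simp only [← Complex.ofReal_add]
        congr 1
        rcases le_total (ev i) 0 with h | h
        · simp [max_eq_right h, max_eq_left (neg_nonneg.mpr h), abs_of_nonpos h]
        · simp [max_eq_left h, max_eq_right (neg_nonpos.mpr h), abs_of_nonneg h]
      rw [hPdef, hQdef, ← add_mul, ← mul_add, diagonal_add, hdd]
    have hsq : (P + Q) ^ 2 = Aᴴ * A := by
      have hdd : (fun i => ((|ev i| : ℝ) : ℂ) * ((|ev i| : ℝ) : ℂ))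
          = (fun i => ((ev i : ℝ) : ℂ) * ((ev i : ℝ) : ℂ)) := by
        funext i
        simp only [← Complex.ofReal_mul, abs_mul_abs_self]
      rw [hAA, habs, pow_two, hspec, hmulUD, hmulUD, diagonal_mul_diagonal,
        diagonal_mul_diagonal, hdd]
    have hsqrt : P + Q = msqrt (Aᴴ * A) := by
      rw [msqrt, dif_pos hpsd]
      have e := CFC.sqrt_unique (a := Aᴴ * A) (b := P + Q) (by rw [← sq]; exact hsq) hPQpsd.nonneg
      rw [CFC.sqrt_eq_cfc, cfc_nnreal_eq_real _ (Aᴴ * A) hpsd.nonneg, hpsd.1.cfc_eq] at e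
      rw [← e, IsHermitian.cfc, Unitary.conjStarAlgAut_apply]
      have hf : (fun x : ℝ => √(max x 0)) = Real.sqrt := by
        funext x
        rcases le_total x 0 with h | h
        · simp [max_eq_right h, Real.sqrt_eq_zero'.mpr h]
        · simp [max_eq_left h]
      simp only [Real.coe_sqrt, Real.coe_toNNReal']
      rw [hf]
      rfl
    rw [traceNorm, ← hsqrt, trace_add, Complex.add_re]
  · rw [htrP, htrQ, htrA, ← Finset.sum_sub_distrib]
    congr 1
    funext i
    rw [← Complex.ofReal_sub, max_zero_sub_max_neg_zero_eq_self]

end psd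

open scoped MatrixOrder

noncomputable def tp {d N : ℕ} (σ : Fin N → Matrix (Fin d) (Fin d) ℂ) :
    Matrix (Fin N → Fin d) (Fin N → Fin d) ℂ :=
  Matrix.of fun i j => ∏ k, σ k (i k) (j k)

variable {d N : ℕ}

lemma tp_mul (σ τ : Fin N → Matrix (Fin d) (Fin d) ℂ) :
    tp σ * tp τ = tp fun k => σ k * τ k := by
  ext i j
  simp only [tp, Matrix.mul_apply, Matrix.of_apply, ← Finset.prod_mul_distrib]
  rw [Finset.prod_univ_sum, Fintype.piFinset_univ]

lemma tp_conjTranspose (σ : Fin N → Matrix (Fin d) (Fin d) ℂ) :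
    (tp σ)ᴴ = tp fun k => (σ k)ᴴ := by
  ext i j
  simp only [tp, Matrix.conjTranspose_apply, Matrix.of_apply, star_prod]

lemma tp_posSemidef {σ : Fin N → Matrix (Fin d) (Fin d) ℂ} (h : ∀ k, (σ k).PosSemidef) :
    (tp σ).PosSemidef := by
  have : tp σ = (tp fun k : Fin N => CFC.sqrt (σ k))ᴴ * tp fun k : Fin N => CFC.sqrt (σ k) := by
    have harg : σ = fun k : Fin N => (CFC.sqrt (σ k))ᴴ * CFC.sqrt (σ k) := by
      funext k
      rw [(CFC.sqrt_nonneg (σ k)).posSemidef.1, CFC.sqrt_mul_sqrt_self (σ k) (h k).nonneg]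
    rw [tp_conjTranspose, tp_mul, ← harg]
  rw [this]
  exact Matrix.posSemidef_conjTranspose_mul_self _

lemma tp_trace (σ : Fin N → Matrix (Fin d) (Fin d) ℂ) :
    (tp σ).trace = ∏ k, (σ k).trace := by
  simp only [Matrix.trace, Matrix.diag, tp, Matrix.of_apply]
  rw [Finset.prod_univ_sum, Fintype.piFinset_univ]

lemma tp_update_sub (σ : Fin N → Matrix (Fin d) (Fin d) ℂ) (e : Fin N)
    (X Y : Matrix (Fin d) (Fin d) ℂ) :
    tp (Function.update σ e X) - tp (Function.update σ e Y)
      = tp (Function.update σ e (X - Y)) := by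
  have key : ∀ Z : Matrix (Fin d) (Fin d) ℂ, ∀ i j : Fin N → Fin d,
      (∏ k, (Function.update σ e Z) k (i k) (j k))
        = Z (i e) (j e) * ∏ k ∈ Finset.univ.erase e, σ k (i k) (j k) := by
    intro Z i j
    rw [← Finset.mul_prod_erase Finset.univ _ (Finset.mem_univ e)]
    congr 1
    · simp
    · exact Finset.prod_congr rfl fun x hx => by
        rw [Function.update_of_ne (Finset.ne_of_mem_erase hx)]
  ext i j
  simp only [tp, Matrix.sub_apply, Matrix.of_apply, key, Matrix.sub_apply]
  ring

end NoGoAux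

open NoGoAux in
/-- Quantitative no-go bound, mixed target state. -/
theorem no_go_mixed {d N : ℕ} (hN : 1 ≤ N)
    (ρ φ : Matrix (Fin d) (Fin d) ℂ)
    (hρ : ρ.PosSemidef) (hρt : ρ.trace = 1)
    (hφ : φ.PosSemidef) (hφt : φ.trace = 1)
    (hdist : (1 / 2) * traceNorm (ρ - φ) = 2 / (9 * N))
    (M : Matrix (Fin N → Fin d) (Fin N → Fin d) ℂ)
    (hM : M.PosSemidef) (hM' : (1 - M).PosSemidef) :
    (1 - ((M * tensorPow φ N).trace).re) +
        (1 / (9 * N)) * ((M * tensorPow ρ N).trace).re ≥ 1 / (27 * N) := by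
  obtain ⟨P, Q, hP, hQ, hPQ, htn, htrPQ⟩ := jordan (hρ.1.sub hφ.1)
  have hΔtr : (ρ - φ).trace = 0 := by rw [trace_sub, hρt, hφt, sub_self]
  have hQre : Q.trace.re = 2 / (9 * N) := by
    have h1 : P.trace = Q.trace := by
      rw [hΔtr] at htrPQ
      linear_combination htrPQ
    rw [htn, h1] at hdist
    linarith
  -- telescoping family
  set g : ℕ → Matrix (Fin N → Fin d) (Fin N → Fin d) ℂ :=
    fun m => tp (fun j : Fin N => if (j : ℕ) < m then ρ else φ) with hgdef
  set f : ℕ → ℝ := fun m => ((M * g m).trace).re with hfdef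
  have hg0 : g 0 = tensorPow φ N := by
    simp only [hgdef, Nat.not_lt_zero, if_false]
    rfl
  have hgN : g N = tensorPow ρ N := by
    simp only [hgdef]
    have : (fun j : Fin N => if (j : ℕ) < N then ρ else φ) = fun _ : Fin N => ρ := by
      funext j
      simp [j.is_lt]
    rw [this]
    rfl
  have hsubre : ∀ A B : Matrix (Fin N → Fin d) (Fin N → Fin d) ℂ,
      (M * (A - B)).trace.re = (M * A).trace.re - (M * B).trace.re := by
    intro A B
    rw [mul_sub, trace_sub, Complex.sub_re]
  have key : ∀ m, m < N → -(2 / (9 * (N:ℝ))) ≤ f (m + 1) - f m := by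
    intro m hm
    set e : Fin N := ⟨m, hm⟩ with he
    set bas : Fin N → Matrix (Fin d) (Fin d) ℂ :=
      fun j => if (j : ℕ) < m then ρ else φ with hbas
    have hbase : ∀ j, (bas j).PosSemidef := fun j => by
      by_cases h : (j : ℕ) < m <;> simp [hbas, h, hρ, hφ]
    have hupd : ∀ {X : Matrix (Fin d) (Fin d) ℂ}, X.PosSemidef →
        ∀ j, ((Function.update bas e X) j).PosSemidef := by
      intro X hX j
      by_cases h : j = e
      · subst h; rw [Function.update_self]; exact hX
      · rw [Function.update_of_ne h]; exact hbase j
    have hgm : g m = tp (Function.update bas e φ) := by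
      have hbe : bas e = φ := by simp [hbas, he]
      rw [← hbe, Function.update_eq_self]
    have hgm1 : g (m + 1) = tp (Function.update bas e ρ) := by
      have : (fun j : Fin N => if (j : ℕ) < m + 1 then ρ else φ)
          = Function.update bas e ρ := by
        funext j
        by_cases h : j = e
        · subst h
          rw [Function.update_self]
          simp [he]
        · rw [Function.update_of_ne h, hbas]
          have hne : (j : ℕ) ≠ m := fun hc => h (Fin.ext (by simp [he, hc]))
          have : ((j : ℕ) < m + 1) ↔ ((j : ℕ) < m) := by omega
          simp [this]
      show tp (fun j : Fin N => if (j : ℕ) < m + 1 then ρ else φ) = _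
      rw [this]
    have h1 : g (m + 1) - g m = tp (Function.update bas e P) - tp (Function.update bas e Q) := by
      rw [hgm1, hgm, tp_update_sub, hPQ, ← tp_update_sub]
    have h2 : f (m + 1) - f m
        = (M * tp (Function.update bas e P)).trace.re
          - (M * tp (Function.update bas e Q)).trace.re := by
      rw [hfdef]
      simp only
      rw [← hsubre, ← hsubre, h1]
    have hposP : 0 ≤ (M * tp (Function.update bas e P)).trace.re :=
      trace_mul_psd_nonneg hM (tp_posSemidef (hupd hP))
    have hleQ : (M * tp (Function.update bas e Q)).trace.re
        ≤ (tp (Function.update bas e Q)).trace.re :=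
      trace_mul_psd_le hM' (tp_posSemidef (hupd hQ))
    have htrQ' : (tp (Function.update bas e Q)).trace = Q.trace := by
      rw [tp_trace, ← Finset.mul_prod_erase Finset.univ _ (Finset.mem_univ e),
        Function.update_self]
      have h3 : ∏ x ∈ Finset.univ.erase e, ((Function.update bas e Q) x).trace = 1 :=
        Finset.prod_eq_one fun x hx => by
          rw [Function.update_of_ne (Finset.ne_of_mem_erase hx), hbas]
          by_cases h : (x : ℕ) < m <;> simp [h, hρt, hφt]
      rw [h3, mul_one]
    rw [h2]
    have : (tp (Function.update bas e Q)).trace.re = 2 / (9 * N) := by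
      rw [htrQ', hQre]
    linarith
  have hsum : ∑ k ∈ Finset.range N, (f (k + 1) - f k) = f N - f 0 :=
    Finset.sum_range_sub f N
  have hNpos : (0:ℝ) < N := by
    have : (1:ℝ) ≤ N := by exact_mod_cast hN
    linarith
  have hlow : -(2/9 : ℝ) ≤ f N - f 0 := by
    rw [← hsum]
    have hb : ∀ k ∈ Finset.range N, -(2 / (9 * (N:ℝ))) ≤ f (k + 1) - f k := by
      intro k hk
      exact key k (Finset.mem_range.mp hk)
    have := Finset.card_nsmul_le_sum (Finset.range N) (fun k => f (k + 1) - f k)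
      (-(2 / (9 * (N:ℝ)))) hb
    rw [Finset.card_range, nsmul_eq_mul] at this
    have heq : (N:ℝ) * (-(2 / (9 * (N:ℝ)))) = -(2/9) := by
      field_simp
    linarith [heq ▸ this]
  have ht1 : f 0 ≤ 1 := by
    rw [hfdef]
    simp only
    rw [hg0]
    have hφt' : (tensorPow φ N).trace = 1 := by
      have : tensorPow φ N = tp (fun _ : Fin N => φ) := rfl
      rw [this, tp_trace]
      simp [hφt]
    have := trace_mul_psd_le hM' (show (tensorPow φ N).PosSemidef from
      tp_posSemidef (fun _ => hφ))
    rw [hφt'] at this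
    simpa using this
  have hs0 : 0 ≤ f N := by
    rw [hfdef]
    simp only
    rw [hgN]
    exact trace_mul_psd_nonneg hM (show (tensorPow ρ N).PosSemidef from
      tp_posSemidef (fun _ => hρ))
  have hf0 : f 0 = ((M * tensorPow φ N).trace).re := by rw [hfdef]; simp only; rw [hg0]
  have hfN : f N = ((M * tensorPow ρ N).trace).re := by rw [hfdef]; simp only; rw [hgN]
  rw [← hf0, ← hfN, ge_iff_le, div_le_iff₀ (by positivity : (0:ℝ) < 27 * N)]
  have hn1 : (1:ℝ) ≤ N := by exact_mod_cast hN
  have expand : ((1 - f 0) + 1 / (9 * (N:ℝ)) * f N) * (27 * N)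
      = (1 - f 0) * (27 * N) + 3 * f N := by
    field_simp
    ring
  rw [expand]
  nlinarith [mul_nonneg (sub_nonneg.mpr ht1) (sub_nonneg.mpr hn1)]
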